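/- Let F̄ ⊆ K̄ be finite fields with [K̄:F̄] = m and Gal(K̄/F̄) = ⟨σ̄⟩, and let d̄ ∈ K̄^×. If 1, d̄, d̄², ..., d̄^{m−1} are linearly dependent over F̄ (in particular this always holds when F̄ = 𝔽₂, K̄ = 𝔽₁₆, m = 4), then the polynomial t^m − d̄ is reducible in K̄[t;σ̄] and the nonassociative cyclic algebra (K̄/F̄, σ̄, d̄) = K̄[t;σ̄]/K̄[t;σ̄](t^m − d̄) has zero divisors. -/

import Mathlib

/-- An abstract presentation of the skew polynomial ring `S[t;σ,δ]`:
a ring `R` together with an embedding of `S`, a variable `t` satisfying the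
commutation rule `t·a = σ(a)·t + δ(a)`, such that the `t^i` form a basis of `R`
as a left `S`-module (encoded by the coefficient equivalence). -/
structure SkewPolyRing (S : Type*) (R : Type*) [Ring S] [Ring R]
    (σ : S →+* S) (δ : S →+ S) : Type _ where
  ι : S →+* R
  t : R
  t_comm : ∀ a : S, t * ι a = ι (σ a) * t + ι (δ a)
  coeff : R ≃+ (ℕ →₀ S)
  coeff_symm : ∀ p : ℕ →₀ S, coeff.symm p = p.sum fun i a => ι a * t ^ i

namespace SkewPolyRing

variable {S R : Type*} [Ring S] [Ring R] {σ : S →+* S} {δ : S →+ S}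

/-- `g` has degree `< m`. -/
def degLT (P : SkewPolyRing S R σ δ) (g : R) (m : ℕ) : Prop :=
  ∀ i, m ≤ i → P.coeff g i = 0

/-- The degree of a skew polynomial (with `deg 0 = 0` by convention). -/
noncomputable def deg (P : SkewPolyRing S R σ δ) (g : R) : ℕ :=
  (P.coeff g).support.sup id

/-- `f` is monic of degree `m`. -/
def MonicDeg (P : SkewPolyRing S R σ δ) (f : R) (m : ℕ) : Prop :=
  P.coeff f m = 1 ∧ ∀ i, m < i → P.coeff f i = 0

/-- `modr` computes a remainder of right division by `f`. -/
def IsModr (P : SkewPolyRing S R σ δ) (f : R) (m : ℕ) (modr : R → R) : Prop :=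
  ∀ g : R, P.degLT (modr g) m ∧ ∃ q : R, g = q * f + modr g

end SkewPolyRing

section Aux

namespace SkewPolyRing

variable {S R : Type*} [Ring S] [Ring R] {σ : S →+* S}

lemma t_mul_iota (P : SkewPolyRing S R σ 0) (a : S) :
    P.t * P.ι a = P.ι (σ a) * P.t := by
  have h := P.t_comm a
  simpa using h

lemma symm_single (P : SkewPolyRing S R σ 0) (i : ℕ) (a : S) :
    P.coeff.symm (Finsupp.single i a) = P.ι a * P.t ^ i := by
  rw [P.coeff_symm]
  exact Finsupp.sum_single_index (by simp)

lemma coeff_mono (P : SkewPolyRing S R σ 0) (i : ℕ) (a : S) :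
    P.coeff (P.ι a * P.t ^ i) = Finsupp.single i a := by
  rw [← P.symm_single]; exact P.coeff.apply_symm_apply _

end SkewPolyRing

private lemma nat_geom_sum (x : ℕ) (hx : 1 ≤ x) (n : ℕ) :
    (∑ j ∈ Finset.range n, x ^ j) * (x - 1) + 1 = x ^ n := by
  induction n with
  | zero => simp
  | succ n ih =>
    rw [Finset.sum_range_succ, add_mul, pow_succ]
    have h1 : 1 ≤ x ^ n := Nat.one_le_pow _ _ hx
    have h2 : x ^ n * (x - 1) = x ^ n * x - x ^ n := by
      rw [Nat.mul_sub, mul_one]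
    have h3 : x ^ n ≤ x ^ n * x := Nat.le_mul_of_pos_right _ (by omega)
    omega

/-- Let `F̄ ⊆ K̄` be finite fields with `[K̄:F̄] = m` and `Gal(K̄/F̄) = ⟨σ̄⟩`, and let
`d̄ ∈ K̄^×`.  If `1, d̄, d̄², …, d̄^{m−1}` are linearly dependent over `F̄` (as always
happens e.g. for `F̄ = 𝔽₂`, `K̄ = 𝔽₁₆`, `m = 4`), then `t^m − d̄` is reducible in
`K̄[t;σ̄]` and the nonassociative cyclic algebra
`(K̄/F̄, σ̄, d̄) = K̄[t;σ̄]/K̄[t;σ̄](t^m − d̄)` has zero divisors. -/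
theorem cyclic_algebra_with_zero_divisors {F K R : Type*} [Field F] [Field K]
    [Fintype F] [Fintype K] [Algebra F K] [Ring R]
    (m : ℕ) (hdeg : Module.finrank F K = m)
    (σ : K ≃ₐ[F] K) (hgen : ∀ τ : K ≃ₐ[F] K, τ ∈ Subgroup.zpowers σ)
    (σr : K →+* K) (hσr : ∀ x : K, σr x = σ x)
    (d : K) (hd : d ≠ 0)
    (hdep : ¬ LinearIndependent F (fun i : Fin m => d ^ (i : ℕ)))
    (P : SkewPolyRing K R σr 0) (f : R)
    (hf : f = P.coeff.symm (Finsupp.single m 1 - Finsupp.single 0 d))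
    (modr : R → R) (hmodr : P.IsModr f m modr) :
    -- `t^m − d̄` is reducible in `K̄[t;σ̄]`:
    (∃ g h : R, P.degLT g m ∧ P.degLT h m ∧ f = g * h) ∧
    -- the nonassociative cyclic algebra `(K̄/F̄, σ̄, d̄)` has zero divisors:
    (∃ a b : R, P.degLT a m ∧ P.degLT b m ∧ a ≠ 0 ∧ b ≠ 0 ∧ modr (a * b) = 0) := by
  classical
  have hm0 : 0 < m := hdeg ▸ Module.finrank_pos
  set q := Fintype.card F with hq
  have hq2 : 2 ≤ q := Fintype.one_lt_card
  have hKcard : Fintype.card K = q ^ m := by rw [← hdeg]; exact Module.card_eq_pow_finrank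
  have hint : IsIntegral F d := IsIntegral.of_finite F d
  set L : IntermediateField F K := IntermediateField.adjoin F {d} with hL
  set s := Module.finrank F L with hs
  set r := Module.finrank L K with hr
  have hsr : s * r = m := by rw [hs, hr, ← hdeg]; exact Module.finrank_mul_finrank F L K
  have hs1 : 0 < s := Module.finrank_pos
  -- `s < m` from the linear dependence of the powers of `d`
  have hslt : s < m := by
    obtain ⟨gc, hrel, i0, hi0⟩ := Fintype.not_linearIndependent_iff.mp hdep
    set pc : Polynomial F := ∑ i : Fin m, Polynomial.C (gc i) * Polynomial.X ^ (i : ℕ) with hpc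
    have hpe : Polynomial.aeval d pc = 0 := by
      rw [hpc, map_sum, ← hrel]
      refine Finset.sum_congr rfl fun i _ => ?_
      rw [map_mul, Polynomial.aeval_C, map_pow, Polynomial.aeval_X, Algebra.smul_def]
    have hpne : pc ≠ 0 := by
      intro h0
      apply hi0
      have := congrArg (fun pp => Polynomial.coeff pp (i0 : ℕ)) h0
      simp only [hpc, Polynomial.finset_sum_coeff, Polynomial.coeff_C_mul,
        Polynomial.coeff_X_pow, Polynomial.coeff_zero] at this
      rw [Finset.sum_eq_single i0] at this
      · simpa using this
      · intro i _ hne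
        have : (i : ℕ) ≠ (i0 : ℕ) := fun hh => hne (Fin.val_injective hh)
        simp [if_neg (Ne.symm this)]
      · simp
    have hdeglt : pc.degree < (m : ℕ) := by
      refine lt_of_le_of_lt (Polynomial.degree_sum_le _ _) ?_
      rw [Finset.sup_lt_iff (by exact_mod_cast WithBot.bot_lt_coe m)]
      intro i _
      exact lt_of_le_of_lt (Polynomial.degree_C_mul_X_pow_le _ _)
        (by exact_mod_cast i.isLt)
    have hmle : (minpoly F d).degree ≤ pc.degree := minpoly.degree_le_of_ne_zero F d hpne hpe
    have hsdeg : s = (minpoly F d).natDegree := by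
      rw [hs, hL]; exact IntermediateField.adjoin.finrank hint
    have hne : minpoly F d ≠ 0 := minpoly.ne_zero hint
    have : (minpoly F d).degree < (m : ℕ) := lt_of_le_of_lt hmle hdeglt
    rw [Polynomial.degree_eq_natDegree hne] at this
    rw [hsdeg]
    exact_mod_cast this
  have hr2 : 2 ≤ r := by
    rcases r with _ | _ | r
    · omega
    · omega
    · omega
  have hm2 : 2 ≤ m := by nlinarith
  -- the Frobenius as an `F`-algebra automorphism of `K`
  obtain ⟨p, hpK⟩ := CharP.exists K
  haveI hpF : Fact p.Prime := ⟨CharP.char_is_prime K p⟩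
  haveI : CharP F p := (Algebra.charP_iff F K p).mpr hpK
  obtain ⟨nf, -, hnf⟩ := FiniteField.card F p
  haveI : ExpChar K p := ExpChar.prime hpF.out
  have hfrobq : ∀ x : K, ((frobenius K p) ^ (nf : ℕ)) x = x ^ q := by
    intro x
    have h1 : ⇑((frobenius K p) ^ (nf : ℕ)) = (frobenius K p)^[(nf : ℕ)] :=
      RingHom.coe_pow _ _
    rw [h1, iterate_frobenius, hq, hnf]
  have hfro_comm : ∀ a : F, ((frobenius K p) ^ (nf : ℕ)) (algebraMap F K a)
      = algebraMap F K a := by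
    intro a
    rw [hfrobq, ← map_pow, FiniteField.pow_card]
  let fro : K →ₐ[F] K := { ((frobenius K p) ^ (nf : ℕ) : K →+* K) with
    commutes' := hfro_comm }
  have hfro_bij : Function.Bijective fro :=
    Finite.injective_iff_bijective.mp (fro.toRingHom.injective)
  let φ : K ≃ₐ[F] K := AlgEquiv.ofBijective fro hfro_bij
  have hφ : ∀ x : K, φ x = x ^ q := fun x => hfrobq x
  have hφpow : ∀ (n : ℕ) (x : K), (φ ^ n) x = x ^ q ^ n := by
    intro n
    induction n with
    | zero => intro x; simp
    | succ n ih =>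
      intro x
      rw [pow_succ, AlgEquiv.mul_apply, hφ x, ih, ← pow_mul, pow_succ']
  -- order of σ is m
  have hcardG : Fintype.card (K ≃ₐ[F] K) = m := by
    rw [← Nat.card_eq_fintype_card, IsGalois.card_aut_eq_finrank, hdeg]
  have hordσ : orderOf σ = m := by
    rw [orderOf_eq_card_of_forall_mem_zpowers hgen, Nat.card_eq_fintype_card, hcardG]
  -- a generator of the unit group
  obtain ⟨u, hu⟩ := IsCyclic.exists_generator (α := Kˣ)
  set N := q ^ m - 1 with hN
  have hNu : orderOf u = N := by
    rw [orderOf_eq_card_of_forall_mem_zpowers hu, Nat.card_eq_fintype_card,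
      Fintype.card_units, hKcard]
  have hqm1 : q ^ m = N + 1 := by
    have : 1 ≤ q ^ m := Nat.one_le_pow _ _ (by omega)
    omega
  -- order of the Frobenius is m
  have hordφ : orderOf φ = m := by
    have hdvd : orderOf φ ∣ m := by rw [← hcardG]; exact orderOf_dvd_card
    have hpos : 0 < orderOf φ := orderOf_pos φ
    have h1 : (φ ^ orderOf φ) ((u : Kˣ) : K) = ((u : Kˣ) : K) := by
      rw [pow_orderOf_eq_one]; rfl
    rw [hφpow] at h1
    have h2 : u ^ q ^ orderOf φ = u ^ 1 := Units.ext (by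
      rw [Units.val_pow_eq_pow_val, pow_one]; exact h1)
    have h3 : q ^ orderOf φ ≡ 1 [MOD N] := by
      rw [← hNu]; exact pow_eq_pow_iff_modEq.mp h2
    have h4 : N ∣ q ^ orderOf φ - 1 :=
      (Nat.modEq_iff_dvd' (Nat.one_le_pow _ _ (by omega))).mp h3.symm
    have h5 : 2 ≤ q ^ orderOf φ := by
      calc 2 ≤ q := hq2
        _ ≤ q ^ orderOf φ := Nat.le_self_pow (by omega) q
    have h6 : N ≤ q ^ orderOf φ - 1 := Nat.le_of_dvd (by omega) h4
    have h7 : q ^ m ≤ q ^ orderOf φ := by omega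
    have h8 : m ≤ orderOf φ := (Nat.pow_le_pow_iff_right (by omega)).mp h7
    have h9 : orderOf φ ≤ m := Nat.le_of_dvd hm0 hdvd
    omega
  -- σ is a power of the Frobenius with exponent prime to m
  obtain ⟨j, hj⟩ := (Submonoid.mem_powers_iff _ _).mp
    (mem_powers_iff_mem_zpowers.mpr (hgen φ))
  have hgcdmj : Nat.gcd m j = 1 := by
    have h1 : orderOf (σ ^ j) = m := by rw [hj, hordφ]
    rw [orderOf_pow, hordσ] at h1
    have h2 : Nat.gcd m j ∣ m := Nat.gcd_dvd_left m j
    have h3 : Nat.gcd m j * (m / Nat.gcd m j) = m := Nat.mul_div_cancel' h2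
    rw [h1] at h3
    exact Nat.eq_of_mul_eq_mul_right hm0 (by rw [h3, one_mul])
  obtain ⟨kk, -, hkk⟩ := Nat.exists_mul_mod_eq_one_of_coprime
    (show Nat.Coprime j m by rwa [Nat.coprime_comm, Nat.Coprime]) (by omega : 1 < m)
  have hσφ : σ = φ ^ kk := by
    rw [← hj, ← pow_mul]
    conv_lhs => rw [show σ = σ ^ 1 from (pow_one σ).symm, ← hkk, ← hordσ, pow_mod_orderOf]
  have hckkm : Nat.Coprime kk m := by
    have h1 : Nat.gcd kk m ∣ j * kk := Dvd.dvd.mul_left (Nat.gcd_dvd_left _ _) j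
    have h2 : Nat.gcd kk m ∣ m * (j * kk / m) := Dvd.dvd.mul_right (Nat.gcd_dvd_right _ _) _
    have h3 : m * (j * kk / m) + j * kk % m = j * kk := Nat.div_add_mod _ _
    rw [hkk] at h3
    have h4 : Nat.gcd kk m ∣ j * kk - m * (j * kk / m) := Nat.dvd_sub h1 h2
    rw [show j * kk - m * (j * kk / m) = 1 by omega] at h4
    exact Nat.dvd_one.mp h4
  have hσpow : ∀ (n : ℕ) (x : K), (σ ^ n) x = x ^ q ^ (kk * n) := by
    intro n x
    rw [hσφ, ← pow_mul, hφpow]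
  -- cardinality of L and the equation satisfied by d
  haveI : Fintype L := Fintype.ofFinite L
  have hLcard : Fintype.card L = q ^ s := by rw [hs]; exact Module.card_eq_pow_finrank
  have hdL : d ^ q ^ s = d := by
    have hmem : d ∈ L := IntermediateField.mem_adjoin_simple_self F d
    have h1 := FiniteField.pow_card (⟨d, hmem⟩ : L)
    rw [hLcard] at h1
    have h2 : ((⟨d, hmem⟩ : L) ^ q ^ s : K) = d := congrArg Subtype.val h1
    exact h2
  -- modular arithmetic on exponents
  have hstep1 : ∀ x : ℕ, q ^ x ≡ q ^ (x % m) [MOD N] := by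
    intro x
    conv_lhs => rw [← Nat.div_add_mod x m]
    rw [pow_add, pow_mul]
    have h1 : (q ^ m) ^ (x / m) ≡ 1 ^ (x / m) [MOD N] :=
      Nat.ModEq.pow _ (by rw [hqm1]; exact Nat.add_modEq_left)
    calc (q ^ m) ^ (x / m) * q ^ (x % m) ≡ 1 ^ (x / m) * q ^ (x % m) [MOD N] :=
          h1.mul_right _
      _ = q ^ (x % m) := by rw [one_pow, one_mul]
  have hckkr : Nat.Coprime kk r := by
    have hrm : r ∣ m := ⟨s, by rw [mul_comm]; exact hsr.symm⟩
    exact Nat.Coprime.coprime_dvd_right hrm hckkm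
  obtain ⟨kk', -, hkk'⟩ := Nat.exists_mul_mod_eq_one_of_coprime hckkr (by omega : 1 < r)
  set A := ∑ jj ∈ Finset.range r, q ^ (kk * (s * jj)) with hA
  set B := ∑ jj ∈ Finset.range r, q ^ (s * jj) with hB
  have hmodinv : ∀ x y a : ℕ, x * y % r = 1 → a < r → (y * (x * a % r)) % r = a := by
    intro x y a hxy ha
    have h1 : y * (x * a % r) ≡ y * (x * a) [MOD r] := (Nat.mod_modEq _ r).mul_left y
    have h2 : y * (x * a) = (x * y) * a := by ring
    have h3 : (x * y) * a ≡ 1 * a [MOD r] := Nat.ModEq.mul_right a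
      (show x * y ≡ 1 [MOD r] by unfold Nat.ModEq; rw [hxy, Nat.mod_eq_of_lt (by omega)])
    have h4 : y * (x * a % r) ≡ a [MOD r] := by
      calc y * (x * a % r) ≡ y * (x * a) [MOD r] := h1
        _ = (x * y) * a := h2
        _ ≡ 1 * a [MOD r] := h3
        _ = a := one_mul a
    calc (y * (x * a % r)) % r = a % r := h4
      _ = a := Nat.mod_eq_of_lt ha
  have hBswap : (∑ jj ∈ Finset.range r, q ^ (s * ((kk * jj) % r))) = B := by
    rw [hB]
    refine Finset.sum_nbij' (fun a => (kk * a) % r) (fun a => (kk' * a) % r) ?_ ?_ ?_ ?_ ?_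
    · intro a _; exact Finset.mem_range.mpr (Nat.mod_lt _ (by omega))
    · intro a _; exact Finset.mem_range.mpr (Nat.mod_lt _ (by omega))
    · intro a ha; exact hmodinv kk kk' a hkk' (Finset.mem_range.mp ha)
    · intro a ha; exact hmodinv kk' kk a (by rwa [mul_comm]) (Finset.mem_range.mp ha)
    · intro a _; rfl
  have hABmod : A ≡ B [MOD N] := by
    have hterm : ∀ jj, q ^ (kk * (s * jj)) ≡ q ^ (s * ((kk * jj) % r)) [MOD N] := by
      intro jj
      have h1 := hstep1 (kk * (s * jj))
      have h2 : (kk * (s * jj)) % m = s * ((kk * jj) % r) := by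
        rw [← hsr, show kk * (s * jj) = s * (kk * jj) by ring, Nat.mul_mod_mul_left]
      rwa [h2] at h1
    rw [hA, ← hBswap]
    apply (ZMod.natCast_eq_natCast_iff _ _ _).mp
    rw [Nat.cast_sum, Nat.cast_sum]
    exact Finset.sum_congr rfl fun jj _ =>
      (ZMod.natCast_eq_natCast_iff _ _ _).mpr (hterm jj)
  have hBform : B = ∑ jj ∈ Finset.range r, (q ^ s) ^ jj :=
    Finset.sum_congr rfl fun jj _ => (pow_mul q s jj)
  have hBN : B * (q ^ s - 1) + 1 = q ^ m := by
    rw [hBform, nat_geom_sum (q ^ s) (Nat.one_le_pow _ _ (by omega)) r, ← pow_mul, hsr]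
  -- find `c` with `∏ σ^{s j}(c) = d`
  set Q1 := q ^ s - 1 with hQ1
  have hq2s : 2 ≤ q ^ s := by
    calc 2 ≤ q := hq2
      _ ≤ q ^ s := Nat.le_self_pow (by omega) q
  have hQ1pos : 0 < Q1 := by omega
  set du : Kˣ := Units.mk0 d hd with hdu
  have hduQ : du ^ Q1 = 1 := by
    have h1 : du ^ (Q1 + 1) = du ^ 1 := Units.ext (by
      rw [Units.val_pow_eq_pow_val, pow_one, show Q1 + 1 = q ^ s by omega]
      exact hdL)
    rw [pow_succ, pow_one] at h1
    have h2 : du ^ Q1 * du = 1 * du := by rw [one_mul]; exact h1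
    exact mul_right_cancel h2
  obtain ⟨a, ha⟩ := (Submonoid.mem_powers_iff _ _).mp
    (mem_powers_iff_mem_zpowers.mpr (hu du))
  have hNdvd : N ∣ a * Q1 := by
    rw [← hNu]
    apply orderOf_dvd_of_pow_eq_one
    rw [pow_mul, ha, hduQ]
  have hBdvd : B ∣ a := by
    have hNBQ : N = B * Q1 := by omega
    rw [hNBQ] at hNdvd
    exact (Nat.mul_dvd_mul_iff_right hQ1pos).mp hNdvd
  obtain ⟨b, hb⟩ := hBdvd
  set c : K := ((u ^ b : Kˣ) : K) with hc0
  have huAB : u ^ A = u ^ B := pow_eq_pow_iff_modEq.mpr (by rw [hNu]; exact hABmod)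
  have hcprod : ∏ jj ∈ Finset.range r, (σ ^ (s * jj)) c = d := by
    calc ∏ jj ∈ Finset.range r, (σ ^ (s * jj)) c
        = ∏ jj ∈ Finset.range r, c ^ q ^ (kk * (s * jj)) :=
          Finset.prod_congr rfl fun jj _ => hσpow _ _
      _ = c ^ A := by rw [hA]; exact Finset.prod_pow_eq_pow_sum _ _ _
      _ = d := by
          have h1 : (u ^ b) ^ A = du := by
            calc (u ^ b) ^ A = (u ^ A) ^ b := by rw [← pow_mul, mul_comm, pow_mul]
              _ = (u ^ B) ^ b := by rw [huAB]
              _ = u ^ a := by rw [← pow_mul, ← hb]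
              _ = du := ha
          rw [hc0, ← Units.val_pow_eq_pow_val, h1, hdu, Units.val_mk0]
  -- ===== ring side =====
  have hbr : ∀ (n : ℕ) (x : K), P.t ^ n * P.ι x = P.ι ((σ ^ n) x) * P.t ^ n := by
    intro n
    induction n with
    | zero => intro x; simp
    | succ n ih =>
      intro x
      rw [pow_succ, mul_assoc, P.t_mul_iota, hσr, ← mul_assoc, ih, mul_assoc, ← pow_succ,
        pow_succ σ, AlgEquiv.mul_apply]
  have hfe : f = P.t ^ m - P.ι d := by
    rw [hf, map_sub, P.symm_single, P.symm_single, map_one, one_mul, pow_zero, mul_one]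
  set w : ℕ → K := fun i => ∏ jj ∈ Finset.Ico i r, (σ ^ (s * jj)) c with hw
  have hw0 : w 0 = d := by
    rw [hw]
    show ∏ jj ∈ Finset.Ico 0 r, (σ ^ (s * jj)) c = d
    rw [← Finset.range_eq_Ico]
    exact hcprod
  have hwr : w r = 1 := by
    rw [hw]
    show ∏ jj ∈ Finset.Ico r r, (σ ^ (s * jj)) c = 1
    rw [Finset.Ico_self, Finset.prod_empty]
  have hwstep : ∀ i, i < r → w (i + 1) * (σ ^ (s * i)) c = w i := by
    intro i hi
    rw [hw]
    show (∏ jj ∈ Finset.Ico (i + 1) r, (σ ^ (s * jj)) c) * (σ ^ (s * i)) c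
      = ∏ jj ∈ Finset.Ico i r, (σ ^ (s * jj)) c
    rw [Finset.prod_eq_prod_Ico_succ_bot hi]
    exact mul_comm _ _
  set gP : R := ∑ i ∈ Finset.range r, P.ι (w (i + 1)) * P.t ^ (s * i) with hgP
  set hP : R := P.t ^ s - P.ι c with hhP
  have hterm2 : ∀ i, i < r → (P.ι (w (i + 1)) * P.t ^ (s * i)) * hP
      = (P.ι (w (i + 1)) * P.t ^ (s * (i + 1))) - (P.ι (w i) * P.t ^ (s * i)) := by
    intro i hi
    rw [hhP, mul_sub]
    congr 1
    · rw [mul_assoc, ← pow_add, show s * i + s = s * (i + 1) by ring]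
    · rw [mul_assoc, hbr, ← mul_assoc, ← map_mul, hwstep i hi]
  have hgh : gP * hP = f := by
    rw [hgP, Finset.sum_mul]
    have h1 : ∀ i ∈ Finset.range r, (P.ι (w (i + 1)) * P.t ^ (s * i)) * hP
        = (P.ι (w (i + 1)) * P.t ^ (s * (i + 1))) - (P.ι (w i) * P.t ^ (s * i)) :=
      fun i hi => hterm2 i (Finset.mem_range.mp hi)
    rw [Finset.sum_congr rfl h1,
      Finset.sum_range_sub (fun i => P.ι (w i) * P.t ^ (s * i)),
      hwr, hw0, map_one, one_mul, hsr, Nat.mul_zero, pow_zero, mul_one, hfe]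
  have hdegg : P.degLT gP m := by
    intro i0 hi0
    have hz : ∀ i ∈ Finset.range r, P.coeff (P.ι (w (i + 1)) * P.t ^ (s * i)) i0 = 0 := by
      intro i hi
      rw [P.coeff_mono]
      have h1 : i + 1 ≤ r := Finset.mem_range.mp hi
      have h2 : s * (i + 1) ≤ s * r := Nat.mul_le_mul_left s h1
      have h3 : s * (i + 1) = s * i + s := by ring
      exact Finsupp.single_eq_of_ne (by omega)
    rw [hgP, map_sum, Finsupp.finset_sum_apply]
    exact Finset.sum_eq_zero hz
  have hcoeffh : P.coeff hP = Finsupp.single s 1 - Finsupp.single 0 c := by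
    rw [hhP, map_sub]
    congr 1
    · rw [show P.t ^ s = P.ι 1 * P.t ^ s by rw [map_one, one_mul], P.coeff_mono]
    · rw [show P.ι c = P.ι c * P.t ^ 0 by rw [pow_zero, mul_one], P.coeff_mono]
  have hdegh : P.degLT hP m := by
    intro i0 hi0
    rw [hcoeffh, Finsupp.sub_apply, Finsupp.single_eq_of_ne (by omega : i0 ≠ s),
      Finsupp.single_eq_of_ne (by omega : i0 ≠ (0 : ℕ)), sub_zero]
  have hgne : gP ≠ 0 := by
    intro h0
    have hz : ∀ i ∈ Finset.range r, i ≠ r - 1 →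
        P.coeff (P.ι (w (i + 1)) * P.t ^ (s * i)) (s * (r - 1)) = 0 := by
      intro i _ hne
      rw [P.coeff_mono]
      refine Finsupp.single_eq_of_ne fun hcontra => hne ?_
      have := Nat.eq_of_mul_eq_mul_left hs1 hcontra
      omega
    have h1 : P.coeff gP (s * (r - 1)) = 1 := by
      rw [hgP, map_sum, Finsupp.finset_sum_apply,
        Finset.sum_eq_single_of_mem (r - 1) (Finset.mem_range.mpr (by omega)) hz,
        P.coeff_mono, show r - 1 + 1 = r by omega, hwr, Finsupp.single_eq_same]
    rw [h0, map_zero] at h1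
    simp at h1
  have hhne : hP ≠ 0 := by
    intro h0
    have h1 : P.coeff hP s = 1 := by
      rw [hcoeffh, Finsupp.sub_apply, Finsupp.single_eq_same,
        Finsupp.single_eq_of_ne (by omega : s ≠ (0 : ℕ)), sub_zero]
    rw [h0, map_zero] at h1
    simp at h1
  have hmodf : modr f = 0 := by
    obtain ⟨hlt, qq, hqq⟩ := hmodr f
    have he : modr f = (1 - qq) * f := by
      rw [sub_mul, one_mul]
      exact eq_sub_of_add_eq' hqq.symm
    set e : R := 1 - qq with hee
    by_cases hq0 : e = 0
    · rw [he, hq0, zero_mul]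
    exfalso
    have hpe : P.coeff e ≠ 0 := by
      intro h0
      apply hq0
      have h1 := congrArg P.coeff.symm h0
      rwa [AddEquiv.symm_apply_apply, map_zero] at h1
    set pe := P.coeff e with hpedef
    have hsupp : pe.support.Nonempty := Finsupp.support_nonempty_iff.mpr hpe
    set k := pe.support.max' hsupp with hk
    have hkmem : k ∈ pe.support := pe.support.max'_mem hsupp
    have hkmax : ∀ i ∈ pe.support, i ≤ k := fun i hi => pe.support.le_max' i hi
    have hee2 : e = ∑ i ∈ pe.support, P.ι (pe i) * P.t ^ i := by
      have h1 : e = P.coeff.symm pe := by rw [hpedef, AddEquiv.symm_apply_apply]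
      rw [h1, P.coeff_symm]
      rfl
    have hef : P.coeff (e * f) (k + m) = pe k := by
      conv_lhs => rw [hee2]
      rw [Finset.sum_mul]
      have h2 : ∀ i ∈ pe.support, (P.ι (pe i) * P.t ^ i) * f
          = P.ι (pe i) * P.t ^ (i + m) - P.ι (pe i * (σ ^ i) d) * P.t ^ i := by
        intro i _
        rw [hfe, mul_sub]
        congr 1
        · rw [mul_assoc, ← pow_add]
        · rw [mul_assoc, hbr, ← mul_assoc, ← map_mul]
      have hz : ∀ i ∈ pe.support, i ≠ k →
          P.coeff (P.ι (pe i) * P.t ^ (i + m) - P.ι (pe i * (σ ^ i) d) * P.t ^ i) (k + m)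
            = 0 := by
        intro i hi hne
        have hik := hkmax i hi
        rw [map_sub, Finsupp.sub_apply, P.coeff_mono, P.coeff_mono,
          Finsupp.single_eq_of_ne (by omega : k + m ≠ i + m),
          Finsupp.single_eq_of_ne (by omega : k + m ≠ i), sub_zero]
      rw [Finset.sum_congr rfl h2, map_sum, Finsupp.finset_sum_apply,
        Finset.sum_eq_single_of_mem k hkmem hz, map_sub, Finsupp.sub_apply,
        P.coeff_mono, P.coeff_mono, Finsupp.single_eq_same,
        Finsupp.single_eq_of_ne (by omega : k + m ≠ k), sub_zero]
    have hzero : P.coeff (e * f) (k + m) = 0 := by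
      rw [← he]
      exact hlt _ (by omega)
    exact (Finsupp.mem_support_iff.mp hkmem) (by rw [← hef]; exact hzero)
  refine ⟨⟨gP, hP, hdegg, hdegh, hgh.symm⟩, ⟨gP, hP, hdegg, hdegh, hgne, hhne, ?_⟩⟩
  rw [hgh, hmodf]

end Aux
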